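/- Let A, B ∈ L(X,Y) be bounded linear operators with A injective and with closed range, and set A† = (A*A)⁻¹A*. If ‖(B − A)A†‖ < 1, then B is injective with closed range, B† = (B*B)⁻¹B* is well-defined, and ‖B† − A†‖ ≤ √2 ‖A†‖ ‖B†‖ ‖B − A‖. Consequently, if ‖A†‖‖B − A‖ < 1, then ‖B† − A†‖ ≤ √2 ‖A†‖² ‖B − A‖ / (1 − ‖A†‖‖B − A‖). -/

import Mathlib

open ContinuousLinearMap RealInnerProductSpace

lemma aux_key {Y X : Type*} [NormedAddCommGroup X] [InnerProductSpace ℝ X]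
    [NormedAddCommGroup Y] [InnerProductSpace ℝ Y]
    (D F G : Y →L[ℝ] X) (Q : Y →L[ℝ] Y)
    (hQ : ∀ y, ⟪Q y, y - Q y⟫ = 0)
    (hD : ∀ y, D y = F (Q y) + G (y - Q y))
    (c : ℝ) (hF : ‖F‖ ≤ c) (hG : ‖G‖ ≤ c) : ‖D‖ ≤ Real.sqrt 2 * c := by
  have hc : 0 ≤ c := le_trans (norm_nonneg F) hF
  have hs2 : Real.sqrt 2 ^ 2 = 2 := Real.sq_sqrt (by norm_num)
  apply ContinuousLinearMap.opNorm_le_bound _ (by positivity)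
  intro y
  have h1 : ‖Q y‖ ^ 2 + ‖y - Q y‖ ^ 2 = ‖y‖ ^ 2 := by
    have h2 := norm_add_sq_real (Q y) (y - Q y)
    rw [hQ y, add_sub_cancel] at h2
    linarith
  have h3 : ‖Q y‖ + ‖y - Q y‖ ≤ Real.sqrt 2 * ‖y‖ := by
    have h4 : (‖Q y‖ + ‖y - Q y‖) ^ 2 ≤ 2 * ‖y‖ ^ 2 := by
      nlinarith [sq_nonneg (‖Q y‖ - ‖y - Q y‖)]
    have h5 := Real.sqrt_le_sqrt h4
    rw [Real.sqrt_sq (by positivity)] at h5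
    calc ‖Q y‖ + ‖y - Q y‖ ≤ Real.sqrt (2 * ‖y‖ ^ 2) := h5
      _ = Real.sqrt 2 * ‖y‖ := by
          rw [Real.sqrt_mul (by norm_num), Real.sqrt_sq (norm_nonneg y)]
  calc ‖D y‖ = ‖F (Q y) + G (y - Q y)‖ := by rw [hD y]
    _ ≤ ‖F (Q y)‖ + ‖G (y - Q y)‖ := norm_add_le _ _
    _ ≤ c * ‖Q y‖ + c * ‖y - Q y‖ := by
        gcongr
        · exact (F.le_opNorm _).trans (by gcongr)
        · exact (G.le_opNorm _).trans (by gcongr)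
    _ = c * (‖Q y‖ + ‖y - Q y‖) := by ring
    _ ≤ c * (Real.sqrt 2 * ‖y‖) := by gcongr
    _ = Real.sqrt 2 * c * ‖y‖ := by ring

set_option maxHeartbeats 1000000 in
theorem stmt_5 {X Y : Type*} [NormedAddCommGroup X] [InnerProductSpace ℝ X] [CompleteSpace X]
    [NormedAddCommGroup Y] [InnerProductSpace ℝ Y] [CompleteSpace Y]
    (A B : X →L[ℝ] Y)
    (hAinj : Function.Injective A) (hAcl : IsClosed (Set.range A))
    (S : X →L[ℝ] X)
    (hS1 : S ∘L (adjoint A ∘L A) = 1) (hS2 : (adjoint A ∘L A) ∘L S = 1)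
    (Adag : Y →L[ℝ] X) (hAdag : Adag = S ∘L adjoint A)
    (hBA : ‖(B - A) ∘L Adag‖ < 1) :
    Function.Injective B ∧ IsClosed (Set.range B) ∧
    ∃ T : X →L[ℝ] X, T ∘L (adjoint B ∘L B) = 1 ∧ (adjoint B ∘L B) ∘L T = 1 ∧
      ‖T ∘L adjoint B - Adag‖ ≤ Real.sqrt 2 * ‖Adag‖ * ‖T ∘L adjoint B‖ * ‖B - A‖ ∧
      (‖Adag‖ * ‖B - A‖ < 1 →
        ‖T ∘L adjoint B - Adag‖ ≤
          Real.sqrt 2 * ‖Adag‖ ^ 2 * ‖B - A‖ / (1 - ‖Adag‖ * ‖B - A‖)) := by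
  classical
  -- pointwise facts about `S` and `Adag`
  have pAdag : ∀ y, Adag y = S (adjoint A y) := fun y => by rw [hAdag]; rfl
  have pS1 : ∀ x, S (adjoint A (A x)) = x := fun x => by
    have := DFunLike.congr_fun hS1 x
    simpa using this
  have pS2 : ∀ x, adjoint A (A (S x)) = x := fun x => by
    have := DFunLike.congr_fun hS2 x
    simpa using this
  have pA : ∀ x, Adag (A x) = x := fun x => by rw [pAdag]; exact pS1 x
  have hAdagA : Adag ∘L A = 1 := by
    rw [hAdag, ContinuousLinearMap.comp_assoc, hS1]
  -- the unit `u = 1 + (B - A) ∘L Adag`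
  have hBA' : ‖-((B - A) ∘L Adag)‖ < 1 := by rwa [norm_neg]
  set u : (Y →L[ℝ] Y)ˣ := Units.oneSub (-((B - A) ∘L Adag)) hBA' with hu
  have huval : (u : Y →L[ℝ] Y) = 1 + (B - A) ∘L Adag := by
    rw [hu, Units.val_oneSub, sub_neg_eq_add]
  have hBMA : (u : Y →L[ℝ] Y) ∘L A = B := by
    rw [huval, ContinuousLinearMap.add_comp, ContinuousLinearMap.comp_assoc, hAdagA]
    simp [ContinuousLinearMap.one_def]
  have hBval : ∀ x, B x = (u : Y →L[ℝ] Y) (A x) := fun x => by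
    rw [← hBMA]; rfl
  have huinv : ∀ y, (↑u⁻¹ : Y →L[ℝ] Y) ((u : Y →L[ℝ] Y) y) = y := fun y => by
    have h := DFunLike.congr_fun u.inv_mul y
    rwa [ContinuousLinearMap.mul_apply, ContinuousLinearMap.one_apply] at h
  obtain ⟨v, hv⟩ : ∃ v : Y →L[ℝ] Y, ∀ y, v ((u : Y →L[ℝ] Y) y) = y :=
    ⟨(↑u⁻¹ : Y →L[ℝ] Y), huinv⟩
  clear_value u
  -- injectivity of B
  have hBinj : Function.Injective B := by
    intro x₁ x₂ h
    apply hAinj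
    have h2 : (↑u⁻¹ : Y →L[ℝ] Y) ((u : Y →L[ℝ] Y) (A x₁)) =
        (↑u⁻¹ : Y →L[ℝ] Y) ((u : Y →L[ℝ] Y) (A x₂)) := by
      rw [← hBval, ← hBval, h]
    rwa [huinv, huinv] at h2
  -- closed range of B
  have hBcl : IsClosed (Set.range B) := by
    have hco : ⇑B = ⇑(ContinuousLinearEquiv.unitsEquiv ℝ Y u) ∘ ⇑A := by
      funext x
      rw [Function.comp_apply, ContinuousLinearEquiv.unitsEquiv_apply]
      exact hBval x
    rw [hco, Set.range_comp]
    exact (ContinuousLinearEquiv.unitsEquiv ℝ Y u).toHomeomorph.isClosedMap _ hAcl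
  -- B is bounded below
  have hk : ∀ x, ‖x‖ ≤ ‖Adag‖ * ‖v‖ * ‖B x‖ := by
    intro x
    have h1 : x = Adag (v (B x)) := by
      rw [hBval, hv, pA]
    calc ‖x‖ = ‖Adag (v (B x))‖ := by rw [← h1]
      _ ≤ ‖Adag‖ * ‖v (B x)‖ := Adag.le_opNorm _
      _ ≤ ‖Adag‖ * (‖v‖ * ‖B x‖) := by
          gcongr
          exact ContinuousLinearMap.le_opNorm _ _
      _ = ‖Adag‖ * ‖v‖ * ‖B x‖ := by ring
  obtain ⟨C, hC⟩ : ∃ C' : X →L[ℝ] X, C' = adjoint B ∘L B := ⟨_, rfl⟩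
  have hCinner : ∀ x, ⟪C x, x⟫ = ‖B x‖ ^ 2 := by
    intro x
    rw [hC]
    simp only [ContinuousLinearMap.coe_comp', Function.comp_apply]
    rw [ContinuousLinearMap.adjoint_inner_left, real_inner_self_eq_norm_sq]
  have hCzero : ∀ x, C x = 0 → x = 0 := by
    intro x hx
    have h1 : ‖B x‖ ^ 2 = 0 := by rw [← hCinner x, hx, inner_zero_left]
    have h2 : B x = 0 := by
      have := pow_eq_zero_iff (n := 2) (by norm_num) |>.mp h1
      exact norm_eq_zero.mp this
    apply hBinj
    rw [h2, map_zero]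
  -- C is bounded below
  obtain ⟨k, hkdef⟩ : ∃ k' : ℝ, k' = ‖Adag‖ * ‖v‖ := ⟨_, rfl⟩
  have hk0 : 0 ≤ k := by rw [hkdef]; positivity
  have hCk : ∀ x, ‖x‖ ≤ k ^ 2 * ‖C x‖ := by
    intro x
    have h1 : ‖x‖ ^ 2 ≤ k ^ 2 * (‖C x‖ * ‖x‖) := by
      have h2 : ‖B x‖ ^ 2 ≤ ‖C x‖ * ‖x‖ := by
        rw [← hCinner x]
        exact real_inner_le_norm _ _
      have h3 := hk x
      rw [← hkdef] at h3
      nlinarith [norm_nonneg (B x), norm_nonneg x, norm_nonneg (C x)]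
    rcases eq_or_lt_of_le (norm_nonneg x) with h0 | h0
    · rw [← h0]; positivity
    · nlinarith [norm_nonneg (C x)]
  have hCanti : AntilipschitzWith (⟨k ^ 2, by positivity⟩ : NNReal) C :=
    C.antilipschitz_of_bound fun x => hCk x
  have hCrangecl : IsClosed (Set.range C) :=
    hCanti.isClosed_range C.uniformContinuous
  have hker : C.ker = ⊥ := by
    rw [LinearMap.ker_eq_bot']
    intro m hm
    exact hCzero m hm
  have hrangecl' : IsClosed ((C.range : Submodule ℝ X) : Set X) := by
    rw [LinearMap.coe_range]
    exact hCrangecl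
  haveI : CompleteSpace C.range := hrangecl'.completeSpace_coe
  have htop : C.range = ⊤ := by
    rw [← Submodule.orthogonal_eq_bot_iff]
    rw [Submodule.eq_bot_iff]
    intro x hx
    have h1 : ⟪C x, x⟫ = 0 := by
      have := (Submodule.mem_orthogonal _ x).mp hx (C x) (LinearMap.mem_range_self _ x)
      exact this
    have h2 : ‖B x‖ ^ 2 = 0 := by rw [← hCinner x, h1]
    have h3 : B x = 0 := norm_eq_zero.mp (pow_eq_zero_iff (n := 2) (by norm_num) |>.mp h2)
    apply hBinj
    rw [h3, map_zero]
  -- the inverse T of C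
  obtain ⟨T, hT⟩ : ∃ T' : X →L[ℝ] X,
      T' = ((ContinuousLinearEquiv.ofBijective C hker htop).symm : X →L[ℝ] X) := ⟨_, rfl⟩
  have pTC : ∀ x, T (C x) = x := fun x => by
    rw [hT]
    exact ContinuousLinearEquiv.ofBijective_symm_apply_apply C hker htop x
  have pCT : ∀ x, C (T x) = x := fun x => by
    conv_lhs => rw [hT]
    exact ContinuousLinearEquiv.ofBijective_apply_symm_apply C hker htop x
  have hTC : T ∘L C = 1 := by
    ext x
    simpa using pTC x
  have hCT : C ∘L T = 1 := by
    ext x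
    simpa using pCT x
  -- pointwise versions with B
  have pB : ∀ x, T (adjoint B (B x)) = x := fun x => by
    have h := pTC x
    rw [hC] at h
    simpa using h
  have pCT' : ∀ x, adjoint B (B (T x)) = x := fun x => by
    have h := pCT x
    rw [hC] at h
    simpa using h
  -- adjoint facts
  have hadjC : adjoint C = C := by
    rw [hC, adjoint_comp, adjoint_adjoint]
  have hS_symm : adjoint S = S := by
    have h1 : adjoint S ∘L (adjoint A ∘L A) = 1 := by
      have h2 := congrArg ContinuousLinearMap.adjoint hS2
      rwa [adjoint_comp, adjoint_comp, adjoint_adjoint, ContinuousLinearMap.one_def,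
        adjoint_id, ← ContinuousLinearMap.one_def] at h2
    have h3 := congrArg (fun f => f ∘L S) h1
    simpa [ContinuousLinearMap.comp_assoc, hS2, ContinuousLinearMap.one_def] using h3
  have hT_symm : adjoint T = T := by
    have h1 : adjoint T ∘L C = 1 := by
      have h2 := congrArg ContinuousLinearMap.adjoint hCT
      rwa [adjoint_comp, hadjC, ContinuousLinearMap.one_def, adjoint_id,
        ← ContinuousLinearMap.one_def] at h2
    have h3 := congrArg (fun f => f ∘L T) h1
    simpa [ContinuousLinearMap.comp_assoc, hCT, ContinuousLinearMap.one_def] using h3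
  obtain ⟨Bdag, hBdag⟩ : ∃ Bd : Y →L[ℝ] X, Bd = T ∘L adjoint B := ⟨_, rfl⟩
  have pBdag : ∀ y, Bdag y = T (adjoint B y) := fun y => by rw [hBdag]; rfl
  -- S = Adag ∘L adjoint Adag and T = Bdag ∘L adjoint Bdag
  have hadjAdag : adjoint Adag = A ∘L S := by
    rw [hAdag, adjoint_comp, adjoint_adjoint, hS_symm]
  have hadjBdag : adjoint Bdag = B ∘L T := by
    rw [hBdag, adjoint_comp, adjoint_adjoint, hT_symm]
  have hSnorm : ‖S‖ ≤ ‖Adag‖ * ‖Adag‖ := by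
    have h1 : S = Adag ∘L adjoint Adag := by
      rw [hadjAdag, hAdag]
      rw [ContinuousLinearMap.comp_assoc, ← ContinuousLinearMap.comp_assoc (adjoint A) A S,
        ← ContinuousLinearMap.comp_assoc S ((adjoint A) ∘L A) S, hS1]
      simp [ContinuousLinearMap.one_def]
    calc ‖S‖ = ‖Adag ∘L adjoint Adag‖ := by rw [← h1]
      _ ≤ ‖Adag‖ * ‖adjoint Adag‖ := ContinuousLinearMap.opNorm_comp_le _ _
      _ = ‖Adag‖ * ‖Adag‖ := by rw [ContinuousLinearMap.adjoint.norm_map]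
  have hTnorm : ‖T‖ ≤ ‖Bdag‖ * ‖Bdag‖ := by
    have h1 : T = Bdag ∘L adjoint Bdag := by
      rw [hadjBdag, hBdag]
      rw [ContinuousLinearMap.comp_assoc, ← ContinuousLinearMap.comp_assoc (adjoint B) B T,
        ← hC, ← ContinuousLinearMap.comp_assoc T C T, hTC]
      simp [ContinuousLinearMap.one_def]
    calc ‖T‖ = ‖Bdag ∘L adjoint Bdag‖ := by rw [← h1]
      _ ≤ ‖Bdag‖ * ‖adjoint Bdag‖ := ContinuousLinearMap.opNorm_comp_le _ _
      _ = ‖Bdag‖ * ‖Bdag‖ := by rw [ContinuousLinearMap.adjoint.norm_map]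
  -- orthogonal projections (pointwise)
  have hPorth : ∀ y, ⟪A (Adag y), y - A (Adag y)⟫ = 0 := by
    intro y
    rw [inner_sub_right]
    have e1 : ⟪A (Adag y), y⟫ = ⟪Adag y, adjoint A y⟫ := by
      rw [real_inner_comm, ← ContinuousLinearMap.adjoint_inner_left, real_inner_comm]
    have e2 : ⟪A (Adag y), A (Adag y)⟫ = ⟪Adag y, adjoint A y⟫ := by
      rw [real_inner_comm, ← ContinuousLinearMap.adjoint_inner_left]
      have : adjoint A (A (Adag y)) = adjoint A y := by
        rw [pAdag, pS2]
      rw [this, real_inner_comm]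
    rw [e1, e2, sub_self]
  have hQorth : ∀ y, ⟪B (Bdag y), y - B (Bdag y)⟫ = 0 := by
    intro y
    rw [inner_sub_right]
    have e1 : ⟪B (Bdag y), y⟫ = ⟪Bdag y, adjoint B y⟫ := by
      rw [real_inner_comm, ← ContinuousLinearMap.adjoint_inner_left, real_inner_comm]
    have e2 : ⟪B (Bdag y), B (Bdag y)⟫ = ⟪Bdag y, adjoint B y⟫ := by
      rw [real_inner_comm, ← ContinuousLinearMap.adjoint_inner_left]
      have : adjoint B (B (Bdag y)) = adjoint B y := by
        rw [pBdag, pCT']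
      rw [this, real_inner_comm]
    rw [e1, e2, sub_self]
  have pBdagB : ∀ x, Bdag (B x) = x := fun x => by
    rw [pBdag]; exact pB x
  -- main estimate
  obtain ⟨c, hc⟩ : ∃ c' : ℝ, c' = ‖Adag‖ * ‖Bdag‖ * ‖B - A‖ := ⟨_, rfl⟩
  have hmain : ‖Bdag - Adag‖ ≤ Real.sqrt 2 * c := by
    rcases le_total ‖Bdag‖ ‖Adag‖ with hle | hle
    · -- use projection P = A ∘L Adag
      apply aux_key (Bdag - Adag) (-(Bdag ∘L ((B - A) ∘L Adag))) (T ∘L adjoint (B - A))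
        (A ∘L Adag) (fun y => hPorth y) ?_ c ?_ ?_
      · intro y
        have radj : adjoint (B - A) = adjoint B - adjoint A := map_sub adjoint B A
        have r2 : ∀ z : Y, adjoint A (A (Adag z)) = adjoint A z := fun z => by
          rw [pAdag, pS2]
        simp only [radj, pBdag, ContinuousLinearMap.sub_apply, ContinuousLinearMap.neg_apply,
          ContinuousLinearMap.coe_comp', Function.comp_apply, map_sub, pA, pB, r2,
          sub_self, map_zero]
        abel
      · rw [norm_neg]
        calc ‖Bdag ∘L ((B - A) ∘L Adag)‖ ≤ ‖Bdag‖ * ‖(B - A) ∘L Adag‖ :=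
              ContinuousLinearMap.opNorm_comp_le _ _
          _ ≤ ‖Bdag‖ * (‖B - A‖ * ‖Adag‖) := by
              gcongr
              exact ContinuousLinearMap.opNorm_comp_le _ _
          _ = c := by rw [hc]; ring
      · calc ‖T ∘L adjoint (B - A)‖ ≤ ‖T‖ * ‖adjoint (B - A)‖ :=
              ContinuousLinearMap.opNorm_comp_le _ _
          _ = ‖T‖ * ‖B - A‖ := by rw [ContinuousLinearMap.adjoint.norm_map]
          _ ≤ (‖Bdag‖ * ‖Bdag‖) * ‖B - A‖ := by gcongr
          _ ≤ (‖Adag‖ * ‖Bdag‖) * ‖B - A‖ := by gcongr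
          _ = c := by rw [hc]
    · -- use projection Q = B ∘L Bdag
      apply aux_key (Bdag - Adag) (-(Adag ∘L ((B - A) ∘L Bdag))) (S ∘L adjoint (B - A))
        (B ∘L Bdag) (fun y => hQorth y) ?_ c ?_ ?_
      · intro y
        have radj : adjoint (B - A) = adjoint B - adjoint A := map_sub adjoint B A
        simp only [radj, pBdag, ContinuousLinearMap.sub_apply, ContinuousLinearMap.neg_apply,
          ContinuousLinearMap.coe_comp', Function.comp_apply, map_sub, pA, pCT',
          ← pAdag, sub_self, map_zero]
        abel
      · rw [norm_neg]
        calc ‖Adag ∘L ((B - A) ∘L Bdag)‖ ≤ ‖Adag‖ * ‖(B - A) ∘L Bdag‖ :=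
              ContinuousLinearMap.opNorm_comp_le _ _
          _ ≤ ‖Adag‖ * (‖B - A‖ * ‖Bdag‖) := by
              gcongr
              exact ContinuousLinearMap.opNorm_comp_le _ _
          _ = c := by rw [hc]; ring
      · calc ‖S ∘L adjoint (B - A)‖ ≤ ‖S‖ * ‖adjoint (B - A)‖ :=
              ContinuousLinearMap.opNorm_comp_le _ _
          _ = ‖S‖ * ‖B - A‖ := by rw [ContinuousLinearMap.adjoint.norm_map]
          _ ≤ (‖Adag‖ * ‖Adag‖) * ‖B - A‖ := by gcongr
          _ ≤ (‖Adag‖ * ‖Bdag‖) * ‖B - A‖ := by gcongr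
          _ = c := by rw [hc]
  -- last part : bound on ‖Bdag‖
  have hBxle : ∀ y, ‖B (Bdag y)‖ ≤ ‖y‖ := by
    intro y
    have h1 : ‖B (Bdag y)‖ ^ 2 = ⟪B (Bdag y), y⟫ := by
      have e0 : adjoint B (B (Bdag y)) = adjoint B y := by rw [pBdag, pCT']
      rw [← real_inner_self_eq_norm_sq,
        ← ContinuousLinearMap.adjoint_inner_right B (Bdag y) (B (Bdag y)), e0,
        ContinuousLinearMap.adjoint_inner_right]
    have h2 : ⟪B (Bdag y), y⟫ ≤ ‖B (Bdag y)‖ * ‖y‖ := real_inner_le_norm _ _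
    nlinarith [norm_nonneg (B (Bdag y)), norm_nonneg y]
  have hpt : ∀ x, (1 - ‖Adag‖ * ‖B - A‖) * ‖x‖ ≤ ‖Adag‖ * ‖B x‖ := by
    intro x
    have h1 : ‖x‖ ≤ ‖Adag‖ * ‖A x‖ := by
      calc ‖x‖ = ‖Adag (A x)‖ := by rw [pA]
        _ ≤ ‖Adag‖ * ‖A x‖ := Adag.le_opNorm _
    have h2 : ‖A x‖ ≤ ‖B x‖ + ‖B - A‖ * ‖x‖ := by
      have h3 : A x = B x - (B - A) x := by simp
      rw [h3]
      calc ‖B x - (B - A) x‖ ≤ ‖B x‖ + ‖(B - A) x‖ := norm_sub_le _ _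
        _ ≤ ‖B x‖ + ‖B - A‖ * ‖x‖ := by
            gcongr
            exact ContinuousLinearMap.le_opNorm _ _
    have h4 : ‖Adag‖ * ‖A x‖ ≤ ‖Adag‖ * (‖B x‖ + ‖B - A‖ * ‖x‖) :=
      mul_le_mul_of_nonneg_left h2 (norm_nonneg _)
    have h5 : ‖x‖ ≤ ‖Adag‖ * ‖B x‖ + ‖Adag‖ * ‖B - A‖ * ‖x‖ := by
      calc ‖x‖ ≤ ‖Adag‖ * ‖A x‖ := h1
        _ ≤ ‖Adag‖ * (‖B x‖ + ‖B - A‖ * ‖x‖) := h4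
        _ = ‖Adag‖ * ‖B x‖ + ‖Adag‖ * ‖B - A‖ * ‖x‖ := by ring
    have h6 : (1 - ‖Adag‖ * ‖B - A‖) * ‖x‖ = ‖x‖ - ‖Adag‖ * ‖B - A‖ * ‖x‖ := by ring
    linarith
  have hTC' : T ∘L (adjoint B ∘L B) = 1 := by rw [← hC]; exact hTC
  have hCT' : (adjoint B ∘L B) ∘L T = 1 := by rw [← hC]; exact hCT
  refine ⟨hBinj, hBcl, T, hTC', hCT', ?_, ?_⟩
  · calc ‖T ∘L adjoint B - Adag‖ = ‖Bdag - Adag‖ := by rw [hBdag]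
      _ ≤ Real.sqrt 2 * c := hmain
      _ = Real.sqrt 2 * ‖Adag‖ * ‖T ∘L adjoint B‖ * ‖B - A‖ := by
          rw [hc, hBdag]; ring
  · intro h1
    have hpos : 0 < 1 - ‖Adag‖ * ‖B - A‖ := by linarith
    have hBdagnorm : ‖Bdag‖ ≤ ‖Adag‖ / (1 - ‖Adag‖ * ‖B - A‖) := by
      apply ContinuousLinearMap.opNorm_le_bound _ (by positivity)
      intro y
      have h2 := hpt (Bdag y)
      have h3 : ‖Adag‖ * ‖B (Bdag y)‖ ≤ ‖Adag‖ * ‖y‖ := by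
        gcongr
        exact hBxle y
      rw [div_mul_eq_mul_div, le_div_iff₀ hpos]
      linarith
    calc ‖T ∘L adjoint B - Adag‖ = ‖Bdag - Adag‖ := by rw [hBdag]
      _ ≤ Real.sqrt 2 * c := hmain
      _ = Real.sqrt 2 * ‖Adag‖ * ‖Bdag‖ * ‖B - A‖ := by rw [hc]; ring
      _ ≤ Real.sqrt 2 * ‖Adag‖ * (‖Adag‖ / (1 - ‖Adag‖ * ‖B - A‖)) * ‖B - A‖ := by
          have hs : (0:ℝ) ≤ Real.sqrt 2 := Real.sqrt_nonneg 2
          gcongr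
      _ = Real.sqrt 2 * ‖Adag‖ ^ 2 * ‖B - A‖ / (1 - ‖Adag‖ * ‖B - A‖) := by
          rw [eq_div_iff hpos.ne']
          have h : ‖Adag‖ / (1 - ‖Adag‖ * ‖B - A‖) * (1 - ‖Adag‖ * ‖B - A‖) = ‖Adag‖ :=
            div_mul_cancel₀ _ hpos.ne'
          calc Real.sqrt 2 * ‖Adag‖ * (‖Adag‖ / (1 - ‖Adag‖ * ‖B - A‖)) * ‖B - A‖ *
                (1 - ‖Adag‖ * ‖B - A‖)
              = Real.sqrt 2 * ‖Adag‖ *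
                (‖Adag‖ / (1 - ‖Adag‖ * ‖B - A‖) * (1 - ‖Adag‖ * ‖B - A‖)) * ‖B - A‖ := by ring
            _ = Real.sqrt 2 * ‖Adag‖ ^ 2 * ‖B - A‖ := by rw [h]; ring
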